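/- Lift is a semiring homomorphism up to ≈: for all naturals n, m and every interpretation type σ, lift_σ(n+m) ≈ lift_σ(n) ⊕ lift_σ(m), lift_σ(n·m) ≈ lift_σ(n) ⊗ lift_σ(m), and flatten_σ(lift_σ(n)) ≈ n. -/

import Mathlib

/-- Kinds: `κ ::= * | κ ⇒ κ`. -/
inductive Kind : Type
  | star : Kind
  | arr : Kind → Kind → Kind

/-- Closed β-normal interpretation types over a family `Con κ` of closed type
constructors of each kind: the base type `nat`, arrow types, and universal
types (a universal type is given by its instantiation function `Con κ → ITy`). -/
inductive ITy (Con : Kind → Type) : Type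
  | nat : ITy Con
  | arrow : ITy Con → ITy Con → ITy Con
  | all : (κ : Kind) → (Con κ → ITy Con) → ITy Con

/-- The defining (coinductive unfolding) clauses of the typewise ordering with
base comparison `P` of natural-number normal forms at type `nat`:
pointwise over closed normal term arguments at arrow types, and pointwise over
closed type constructors at universal types. -/
def Unfolds {Con : Kind → Type} {Tm : Type}
    (app : Tm → Tm → Tm) (tapp : (κ : Kind) → Tm → Con κ → Tm)
    (Normal : ITy Con → Tm → Prop) (nf : Tm → ℕ)
    (P : ℕ → ℕ → Prop) (R : ITy Con → Tm → Tm → Prop) : Prop :=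
  (∀ s t, R ITy.nat s t ↔ P (nf s) (nf t)) ∧
  (∀ a b s t, R (ITy.arrow a b) s t ↔ ∀ q, Normal a q → R b (app s q) (app t q)) ∧
  (∀ (κ : Kind) (body : Con κ → ITy Con) s t,
    R (ITy.all κ body) s t ↔ ∀ ρ : Con κ, R (body ρ) (tapp κ s ρ) (tapp κ t ρ))

/-- The interpretation calculus: closed interpretation terms with application,
type application, natural number literals and normal forms, the polymorphic
operations `⊕`, `⊗`, `lift`, `flatten`, a reduction relation `⇝` satisfying
the type-directed rules, and the coinductive typewise orderings `≻`, `⪰`. -/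
structure InterpCalc (Con : Kind → Type) (Tm : Type) where
  app : Tm → Tm → Tm
  tapp : (κ : Kind) → Tm → Con κ → Tm
  Normal : ITy Con → Tm → Prop
  HasType : ITy Con → Tm → Prop
  nf : Tm → ℕ
  lit : ℕ → Tm
  plus : ITy Con → Tm → Tm → Tm
  times : ITy Con → Tm → Tm → Tm
  lift : ITy Con → Tm → Tm
  flatten : ITy Con → Tm → Tm
  chi : (κ : Kind) → Con κ
  Red : Tm → Tm → Prop
  succ : ITy Con → Tm → Tm → Prop
  wsucc : ITy Con → Tm → Tm → Prop
  /-- `≻` satisfies the coinductive unfolding clauses with base comparison `>`. -/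
  succ_unfold : Unfolds app tapp Normal nf (· > ·) succ
  /-- `⪰` satisfies the coinductive unfolding clauses with base comparison `≥`. -/
  wsucc_unfold : Unfolds app tapp Normal nf (· ≥ ·) wsucc
  /-- Reduction preserves (unique) normal forms. -/
  nf_red : ∀ s t, Red s t → nf s = nf t
  nf_lit : ∀ n, nf (lit n) = n
  red_app_left : ∀ s s' t, Red s s' → Red (app s t) (app s' t)
  red_app_right : ∀ s t t', Red t t' → Red (app s t) (app s t')
  red_tapp : ∀ (κ : Kind) s s' (ρ : Con κ), Red s s' → Red (tapp κ s ρ) (tapp κ s' ρ)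
  /-- `⊕_nat n m ⇝ n + m` (on normal forms). -/
  nf_plus_nat : ∀ s t, nf (plus ITy.nat s t) = nf s + nf t
  /-- `⊗_nat n m ⇝ n · m` (on normal forms). -/
  nf_times_nat : ∀ s t, nf (times ITy.nat s t) = nf s * nf t
  /-- `lift_nat s ⇝ s`. -/
  nf_lift_nat : ∀ s, nf (lift ITy.nat s) = nf s
  /-- `flatten_nat s ⇝ s`. -/
  nf_flatten_nat : ∀ s, nf (flatten ITy.nat s) = nf s
  /-- `(s ⊕_{σ→τ} t)·q ⇝* (s·q) ⊕_τ (t·q)`. -/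
  red_plus_arrow : ∀ a b s t q,
    Relation.ReflTransGen Red (app (plus (ITy.arrow a b) s t) q)
      (plus b (app s q) (app t q))
  /-- `(s ⊕_{∀α.σ} t)·ρ ⇝* (s·ρ) ⊕ (t·ρ)`. -/
  red_plus_all : ∀ (κ : Kind) (body : Con κ → ITy Con) s t (ρ : Con κ),
    Relation.ReflTransGen Red (tapp κ (plus (ITy.all κ body) s t) ρ)
      (plus (body ρ) (tapp κ s ρ) (tapp κ t ρ))
  /-- `(s ⊗_{σ→τ} t)·q ⇝* (s·q) ⊗_τ (t·q)`. -/
  red_times_arrow : ∀ a b s t q,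
    Relation.ReflTransGen Red (app (times (ITy.arrow a b) s t) q)
      (times b (app s q) (app t q))
  /-- `(s ⊗_{∀α.σ} t)·ρ ⇝* (s·ρ) ⊗ (t·ρ)`. -/
  red_times_all : ∀ (κ : Kind) (body : Con κ → ITy Con) s t (ρ : Con κ),
    Relation.ReflTransGen Red (tapp κ (times (ITy.all κ body) s t) ρ)
      (times (body ρ) (tapp κ s ρ) (tapp κ t ρ))
  /-- `lift_{σ→τ}(n)·q ⇝* lift_τ(n)`. -/
  red_lift_arrow : ∀ a b n q,
    Relation.ReflTransGen Red (app (lift (ITy.arrow a b) n) q) (lift b n)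
  /-- `lift_{∀α.σ}(n)·ρ ⇝* lift_σ(n)`. -/
  red_lift_all : ∀ (κ : Kind) (body : Con κ → ITy Con) n (ρ : Con κ),
    Relation.ReflTransGen Red (tapp κ (lift (ITy.all κ body) n) ρ) (lift (body ρ) n)
  /-- `flatten_{σ→τ}(s) ⇝* flatten_τ(s·lift_σ(0))`. -/
  red_flatten_arrow : ∀ a b s,
    Relation.ReflTransGen Red (flatten (ITy.arrow a b) s)
      (flatten b (app s (lift a (lit 0))))
  /-- `flatten_{∀(α:κ).σ}(s) ⇝* flatten_{σ[α:=χ_κ]}(s·χ_κ)`. -/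
  red_flatten_all : ∀ (κ : Kind) (body : Con κ → ITy Con) s,
    Relation.ReflTransGen Red (flatten (ITy.all κ body) s)
      (flatten (body (chi κ)) (tapp κ s (chi κ)))

/-- `≈`: mutual weak comparison. -/
def InterpCalc.Equiv {Con : Kind → Type} {Tm : Type} (C : InterpCalc Con Tm)
    (σ : ITy Con) (s t : Tm) : Prop :=
  C.wsucc σ s t ∧ C.wsucc σ t s

namespace InterpCalc
section Aux

variable {Con : Kind → Type} {Tm : Type} (C : InterpCalc Con Tm)

lemma nf_redStar {s t : Tm} (h : Relation.ReflTransGen C.Red s t) :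
    C.nf s = C.nf t := by
  induction h with
  | refl => rfl
  | tail _ h ih => rw [ih, C.nf_red _ _ h]

lemma redStar_app_left {s s' : Tm} (q : Tm)
    (h : Relation.ReflTransGen C.Red s s') :
    Relation.ReflTransGen C.Red (C.app s q) (C.app s' q) :=
  Relation.ReflTransGen.lift (fun x => C.app x q)
    (fun a b hab => C.red_app_left a b q hab) _ _ h

lemma redStar_tapp (κ : Kind) {s s' : Tm} (ρ : Con κ)
    (h : Relation.ReflTransGen C.Red s s') :
    Relation.ReflTransGen C.Red (C.tapp κ s ρ) (C.tapp κ s' ρ) :=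
  Relation.ReflTransGen.lift (fun x => C.tapp κ x ρ)
    (fun a b hab => C.red_tapp κ a b ρ hab) _ _ h

lemma wsucc_redStar : ∀ (σ : ITy Con) (s s' t t' : Tm),
    Relation.ReflTransGen C.Red s s' → Relation.ReflTransGen C.Red t t' →
    (C.wsucc σ s t ↔ C.wsucc σ s' t') := by
  obtain ⟨hnat, harr, hall⟩ := C.wsucc_unfold
  intro σ
  induction σ with
  | nat =>
    intro s s' t t' hs ht
    rw [hnat, hnat, C.nf_redStar hs, C.nf_redStar ht]
  | arrow a b iha ihb =>
    intro s s' t t' hs ht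
    rw [harr, harr]
    constructor
    · intro h q hq
      exact (ihb _ _ _ _ (C.redStar_app_left q hs) (C.redStar_app_left q ht)).mp (h q hq)
    · intro h q hq
      exact (ihb _ _ _ _ (C.redStar_app_left q hs) (C.redStar_app_left q ht)).mpr (h q hq)
  | all κ body ih =>
    intro s s' t t' hs ht
    rw [hall, hall]
    constructor
    · intro h ρ
      exact (ih ρ _ _ _ _ (C.redStar_tapp κ ρ hs) (C.redStar_tapp κ ρ ht)).mp (h ρ)
    · intro h ρ
      exact (ih ρ _ _ _ _ (C.redStar_tapp κ ρ hs) (C.redStar_tapp κ ρ ht)).mpr (h ρ)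

lemma lift_plus : ∀ (σ : ITy Con) (n m : ℕ) (s t : Tm),
    Relation.ReflTransGen C.Red s (C.lift σ (C.lit n)) →
    Relation.ReflTransGen C.Red t (C.lift σ (C.lit m)) →
    C.Equiv σ (C.lift σ (C.lit (n + m))) (C.plus σ s t) := by
  obtain ⟨hnat, harr, hall⟩ := C.wsucc_unfold
  intro σ
  induction σ with
  | nat =>
    intro n m s t hs ht
    have h1 : C.nf (C.lift ITy.nat (C.lit (n + m))) = n + m := by
      rw [C.nf_lift_nat, C.nf_lit]
    have h2 : C.nf (C.plus ITy.nat s t) = n + m := by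
      rw [C.nf_plus_nat, C.nf_redStar hs, C.nf_redStar ht,
        C.nf_lift_nat, C.nf_lift_nat, C.nf_lit, C.nf_lit]
    exact ⟨(hnat _ _).mpr (by omega), (hnat _ _).mpr (by omega)⟩
  | arrow a b iha ihb =>
    intro n m s t hs ht
    have key : ∀ q, C.Normal a q →
        C.Equiv b (C.lift b (C.lit (n + m)))
          (C.plus b (C.app s q) (C.app t q)) := by
      intro q _
      exact ihb n m _ _
        ((C.redStar_app_left q hs).trans (C.red_lift_arrow a b (C.lit n) q))
        ((C.redStar_app_left q ht).trans (C.red_lift_arrow a b (C.lit m) q))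
    constructor
    · rw [harr]; intro q hq
      exact (C.wsucc_redStar b _ _ _ _
        (C.red_lift_arrow a b (C.lit (n + m)) q) (C.red_plus_arrow a b s t q)).mpr
        (key q hq).1
    · rw [harr]; intro q hq
      exact (C.wsucc_redStar b _ _ _ _
        (C.red_plus_arrow a b s t q) (C.red_lift_arrow a b (C.lit (n + m)) q)).mpr
        (key q hq).2
  | all κ body ih =>
    intro n m s t hs ht
    have key : ∀ ρ : Con κ,
        C.Equiv (body ρ) (C.lift (body ρ) (C.lit (n + m)))
          (C.plus (body ρ) (C.tapp κ s ρ) (C.tapp κ t ρ)) := by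
      intro ρ
      exact ih ρ n m _ _
        ((C.redStar_tapp κ ρ hs).trans (C.red_lift_all κ body (C.lit n) ρ))
        ((C.redStar_tapp κ ρ ht).trans (C.red_lift_all κ body (C.lit m) ρ))
    constructor
    · rw [hall]; intro ρ
      exact (C.wsucc_redStar (body ρ) _ _ _ _
        (C.red_lift_all κ body (C.lit (n + m)) ρ) (C.red_plus_all κ body s t ρ)).mpr
        (key ρ).1
    · rw [hall]; intro ρ
      exact (C.wsucc_redStar (body ρ) _ _ _ _
        (C.red_plus_all κ body s t ρ) (C.red_lift_all κ body (C.lit (n + m)) ρ)).mpr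
        (key ρ).2

lemma lift_times : ∀ (σ : ITy Con) (n m : ℕ) (s t : Tm),
    Relation.ReflTransGen C.Red s (C.lift σ (C.lit n)) →
    Relation.ReflTransGen C.Red t (C.lift σ (C.lit m)) →
    C.Equiv σ (C.lift σ (C.lit (n * m))) (C.times σ s t) := by
  obtain ⟨hnat, harr, hall⟩ := C.wsucc_unfold
  intro σ
  induction σ with
  | nat =>
    intro n m s t hs ht
    have h2 : C.nf (C.times ITy.nat s t) = n * m := by
      rw [C.nf_times_nat, C.nf_redStar hs, C.nf_redStar ht,
        C.nf_lift_nat, C.nf_lift_nat, C.nf_lit, C.nf_lit]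
    have h1 : C.nf (C.lift ITy.nat (C.lit (n * m))) = n * m := by
      rw [C.nf_lift_nat, C.nf_lit]
    exact ⟨(hnat _ _).mpr (by omega), (hnat _ _).mpr (by omega)⟩
  | arrow a b iha ihb =>
    intro n m s t hs ht
    have key : ∀ q, C.Normal a q →
        C.Equiv b (C.lift b (C.lit (n * m)))
          (C.times b (C.app s q) (C.app t q)) := by
      intro q _
      exact ihb n m _ _
        ((C.redStar_app_left q hs).trans (C.red_lift_arrow a b (C.lit n) q))
        ((C.redStar_app_left q ht).trans (C.red_lift_arrow a b (C.lit m) q))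
    constructor
    · rw [harr]; intro q hq
      exact (C.wsucc_redStar b _ _ _ _
        (C.red_lift_arrow a b (C.lit (n * m)) q) (C.red_times_arrow a b s t q)).mpr
        (key q hq).1
    · rw [harr]; intro q hq
      exact (C.wsucc_redStar b _ _ _ _
        (C.red_times_arrow a b s t q) (C.red_lift_arrow a b (C.lit (n * m)) q)).mpr
        (key q hq).2
  | all κ body ih =>
    intro n m s t hs ht
    have key : ∀ ρ : Con κ,
        C.Equiv (body ρ) (C.lift (body ρ) (C.lit (n * m)))
          (C.times (body ρ) (C.tapp κ s ρ) (C.tapp κ t ρ)) := by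
      intro ρ
      exact ih ρ n m _ _
        ((C.redStar_tapp κ ρ hs).trans (C.red_lift_all κ body (C.lit n) ρ))
        ((C.redStar_tapp κ ρ ht).trans (C.red_lift_all κ body (C.lit m) ρ))
    constructor
    · rw [hall]; intro ρ
      exact (C.wsucc_redStar (body ρ) _ _ _ _
        (C.red_lift_all κ body (C.lit (n * m)) ρ) (C.red_times_all κ body s t ρ)).mpr
        (key ρ).1
    · rw [hall]; intro ρ
      exact (C.wsucc_redStar (body ρ) _ _ _ _
        (C.red_times_all κ body s t ρ) (C.red_lift_all κ body (C.lit (n * m)) ρ)).mpr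
        (key ρ).2

lemma nf_flatten_lift : ∀ (σ : ITy Con) (n : ℕ) (s : Tm),
    Relation.ReflTransGen C.Red s (C.lift σ (C.lit n)) →
    C.nf (C.flatten σ s) = n := by
  intro σ
  induction σ with
  | nat =>
    intro n s hs
    rw [C.nf_flatten_nat, C.nf_redStar hs, C.nf_lift_nat, C.nf_lit]
  | arrow a b iha ihb =>
    intro n s hs
    rw [C.nf_redStar (C.red_flatten_arrow a b s)]
    exact ihb n _
      ((C.redStar_app_left _ hs).trans (C.red_lift_arrow a b (C.lit n) _))
  | all κ body ih =>
    intro n s hs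
    rw [C.nf_redStar (C.red_flatten_all κ body s)]
    exact ih (C.chi κ) n _
      ((C.redStar_tapp κ (C.chi κ) hs).trans (C.red_lift_all κ body (C.lit n) (C.chi κ)))

end Aux
end InterpCalc

/-- `lift` is a semiring homomorphism up to `≈`:
`lift_σ(n+m) ≈ lift_σ(n) ⊕ lift_σ(m)`, `lift_σ(n·m) ≈ lift_σ(n) ⊗ lift_σ(m)`,
and `flatten_σ(lift_σ(n)) ≈ n`. -/
theorem lift_is_semiring_hom_up_to_equiv
    {Con : Kind → Type} {Tm : Type} (C : InterpCalc Con Tm) :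
    ∀ (σ : ITy Con) (n m : ℕ),
      C.Equiv σ (C.lift σ (C.lit (n + m)))
        (C.plus σ (C.lift σ (C.lit n)) (C.lift σ (C.lit m))) ∧
      C.Equiv σ (C.lift σ (C.lit (n * m)))
        (C.times σ (C.lift σ (C.lit n)) (C.lift σ (C.lit m))) ∧
      C.Equiv ITy.nat (C.flatten σ (C.lift σ (C.lit n))) (C.lit n) := by
  intro σ n m
  obtain ⟨hnat, harr, hall⟩ := C.wsucc_unfold
  refine ⟨C.lift_plus σ n m _ _ .refl .refl, C.lift_times σ n m _ _ .refl .refl, ?_⟩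
  have h := C.nf_flatten_lift σ n _ (Relation.ReflTransGen.refl)
  constructor
  · exact (hnat _ _).mpr (by rw [h, C.nf_lit])
  · exact (hnat _ _).mpr (by rw [h, C.nf_lit])
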